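/- Suppose there is a decomposition HW(K_u[g]; m, n, α, β) of K_u[g] into α C_m-factors and β C_n-factors, and for each i with 1 ≤ i ≤ α there is a decomposition of C_m[s] into t_i C_{m'}-factors and s − t_i C_{n'}-factors, and for each j with 1 ≤ j ≤ β there is a decomposition of C_n[s] into r_j C_{m'}-factors and s − r_j C_{n'}-factors. Then K_u[gs] admits a decomposition into α' C_{m'}-factors and (α+β)s − α' C_{n'}-factors, where α' = Σ t_i + Σ r_j. -/

import Mathlib

open SimpleGraph

/-- A `C_k`-factor: a spanning 2-regular subgraph all of whose connected
components (necessarily cycles) have exactly `k` vertices. -/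
def IsCycleFactor {V : Type*} (H : SimpleGraph V) (k : ℕ) : Prop :=
  (∀ v : V, (H.neighborSet v).ncard = 2) ∧
  (∀ v : V, (H.connectedComponentMk v).supp.ncard = k)

/-- A 1-factor (perfect matching): every vertex has exactly one neighbour. -/
def IsOneFactor {V : Type*} (H : SimpleGraph V) : Prop :=
  ∀ v : V, (H.neighborSet v).ncard = 1

/-- `F 0, …, F (N-1)` partitions the edge set of `G`. -/
def IsDecompOn {V : Type*} (G : SimpleGraph V) (F : ℕ → SimpleGraph V) (N : ℕ) : Prop :=
  (∀ i < N, F i ≤ G) ∧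
  (∀ i < N, ∀ j < N, i ≠ j → Disjoint (F i).edgeSet (F j).edgeSet) ∧
  G.edgeSet = ⋃ i ∈ Set.Iio N, (F i).edgeSet

/-- A Hamilton–Waterloo decomposition of a graph `G` into `α` `C_m`-factors
and `β` `C_n`-factors. -/
def IsHWGraph {V : Type*} (G : SimpleGraph V) (m n α β : ℕ) : Prop :=
  ∃ F : ℕ → SimpleGraph V, IsDecompOn G F (α + β) ∧
    (∀ i < α, IsCycleFactor (F i) m) ∧
    (∀ i, α ≤ i → i < α + β → IsCycleFactor (F i) n)

/-- `HW v m n α β`: a partition of `E(K_v)` (for `v` odd) or of `E(K_v)` minus a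
perfect matching (for `v` even) into `α` `C_m`-factors and `β` `C_n`-factors. -/
def HW (v m n α β : ℕ) : Prop :=
  ∃ I : SimpleGraph (Fin v),
    (Odd v → I = ⊥) ∧ (Even v → IsOneFactor I) ∧
    IsHWGraph ((⊤ : SimpleGraph (Fin v)) \ I) m n α β

/-- The complete `u`-partite graph with parts of size `g`. -/
def Kpartite (u g : ℕ) : SimpleGraph (Fin u × Fin g) :=
  SimpleGraph.fromRel (fun a b => a.1 ≠ b.1)

/-- The Cayley graph on an additive group with connection set `S`. -/
def cayley (Γ : Type*) [AddGroup Γ] (S : Set Γ) : SimpleGraph Γ :=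
  SimpleGraph.fromRel (fun a b => a - b ∈ S)

/-- The cycle of length `m`, as a graph on `ZMod m`. -/
def cycGraph (m : ℕ) : SimpleGraph (ZMod m) :=
  SimpleGraph.fromRel (fun a b => a = b + 1)

/-- The lexicographic product `G[s]` of `G` with an empty graph on `s` points. -/
def lexProd {V : Type*} (G : SimpleGraph V) (s : ℕ) : SimpleGraph (V × Fin s) :=
  SimpleGraph.fromRel (fun a b => G.Adj a.1 b.1)

def fiberGraph {V C U : Type*} (ψ : V ≃ C × U) (D : SimpleGraph U) : SimpleGraph V where
  Adj v w := (ψ v).1 = (ψ w).1 ∧ D.Adj (ψ v).2 (ψ w).2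
  symm := ⟨fun v w h => ⟨h.1.symm, h.2.symm⟩⟩
  loopless := ⟨fun v h => D.loopless.irrefl _ h.2⟩

section lemmas

lemma fiberGraph_adj {V C U : Type*} (ψ : V ≃ C × U) (D : SimpleGraph U) (v w : V) :
    (fiberGraph ψ D).Adj v w ↔ (ψ v).1 = (ψ w).1 ∧ D.Adj (ψ v).2 (ψ w).2 := Iff.rfl

lemma fiberGraph_mono {V C U : Type*} (ψ : V ≃ C × U) {D D' : SimpleGraph U}
    (h : D ≤ D') : fiberGraph ψ D ≤ fiberGraph ψ D' := fun _ _ hv => ⟨hv.1, h hv.2⟩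

lemma lexProd_adj {V : Type*} (G : SimpleGraph V) (s : ℕ) (a b : V × Fin s) :
    (lexProd G s).Adj a b ↔ G.Adj a.1 b.1 := by
  constructor
  · rintro ⟨hne, h | h⟩
    · exact h
    · exact h.symm
  · intro h
    exact ⟨fun he => G.loopless.irrefl _ (he ▸ h), Or.inl h⟩

lemma lexProd_mono {V : Type*} {G G' : SimpleGraph V} (s : ℕ) (h : G ≤ G') :
    lexProd G s ≤ lexProd G' s := by
  intro a b hab
  rw [lexProd_adj] at hab ⊢
  exact h hab

lemma lexProd_edge_mem {V : Type*} (G : SimpleGraph V) (s : ℕ) (a b : V × Fin s) :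
    s(a, b) ∈ (lexProd G s).edgeSet ↔ s(a.1, b.1) ∈ G.edgeSet := by
  rw [mem_edgeSet, mem_edgeSet, lexProd_adj]

lemma lexProd_disjoint {V : Type*} {G G' : SimpleGraph V} (s : ℕ)
    (h : Disjoint G.edgeSet G'.edgeSet) :
    Disjoint (lexProd G s).edgeSet (lexProd G' s).edgeSet := by
  rw [Set.disjoint_left]
  intro e he he'
  induction e with
  | h a b =>
    rw [lexProd_edge_mem] at he he'
    exact Set.disjoint_left.mp h he he'

/-- the extended fiber equivalence -/
def fiberExt {V C U : Type*} (ψ : V ≃ C × U) (s : ℕ) : V × Fin s ≃ C × (U × Fin s) where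
  toFun p := ((ψ p.1).1, ((ψ p.1).2, p.2))
  invFun q := (ψ.symm (q.1, q.2.1), q.2.2)
  left_inv p := by simp
  right_inv q := by simp

lemma lexProd_fiberGraph {V C U : Type*} (ψ : V ≃ C × U) (D : SimpleGraph U) (s : ℕ) :
    lexProd (fiberGraph ψ D) s = fiberGraph (fiberExt ψ s) (lexProd D s) := by
  ext ⟨v, x⟩ ⟨w, y⟩
  rw [lexProd_adj, fiberGraph_adj, fiberGraph_adj]
  show (fiberGraph ψ D).Adj v w ↔ (ψ v).1 = (ψ w).1 ∧ (lexProd D s).Adj ((ψ v).2, x) ((ψ w).2, y)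
  rw [fiberGraph_adj, lexProd_adj]

lemma fiberGraph_neighborSet_ncard {V C U : Type*} (ψ : V ≃ C × U) (D : SimpleGraph U) (v : V) :
    ((fiberGraph ψ D).neighborSet v).ncard = (D.neighborSet (ψ v).2).ncard := by
  have himg : (fun w => (ψ w).2) '' ((fiberGraph ψ D).neighborSet v) = D.neighborSet (ψ v).2 := by
    ext u
    constructor
    · rintro ⟨w, hw, rfl⟩
      exact hw.2
    · intro hu
      refine ⟨ψ.symm ((ψ v).1, u), ?_, by simp⟩
      constructor
      · simp
      · simpa using hu
  have hinj : Set.InjOn (fun w => (ψ w).2) ((fiberGraph ψ D).neighborSet v) := by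
    intro a ha b hb hab
    exact ψ.injective (Prod.ext (ha.1.symm.trans hb.1) hab)
  rw [← himg, Set.ncard_image_of_injOn hinj]

lemma fiberGraph_reachable {V C U : Type*} (ψ : V ≃ C × U) (D : SimpleGraph U) (v w : V) :
    (fiberGraph ψ D).Reachable v w ↔ (ψ v).1 = (ψ w).1 ∧ D.Reachable (ψ v).2 (ψ w).2 := by
  constructor
  · intro h
    obtain ⟨p⟩ := h
    induction p with
    | nil => exact ⟨rfl, Reachable.refl _⟩
    | cons h p ih => exact ⟨h.1.trans ih.1, (Adj.reachable h.2).trans ih.2⟩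
  · rintro ⟨hc, hr⟩
    obtain ⟨p⟩ := hr
    have key : ∀ (a b : U), D.Walk a b → ∀ (x : V), ψ x = ((ψ v).1, a) →
        (fiberGraph ψ D).Reachable x (ψ.symm ((ψ v).1, b)) := by
      intro a b p
      induction p with
      | nil =>
        intro x hx
        rw [← hx, Equiv.symm_apply_apply]
      | @cons c d b h p ih =>
        intro x hx
        have h1 : (fiberGraph ψ D).Adj x (ψ.symm ((ψ v).1, d)) := by
          constructor <;> simp [hx, h]
        exact (h1.reachable).trans (ih _ (by simp))
    have := key _ _ p v (by simp)
    have hw : ψ.symm ((ψ v).1, (ψ w).2) = w := by rw [hc]; simp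
    rwa [hw] at this

lemma fiberGraph_supp_ncard {V C U : Type*} (ψ : V ≃ C × U) (D : SimpleGraph U) (v : V) :
    ((fiberGraph ψ D).connectedComponentMk v).supp.ncard
      = (D.connectedComponentMk (ψ v).2).supp.ncard := by
  have himg : (fun w => (ψ w).2) '' ((fiberGraph ψ D).connectedComponentMk v).supp
      = (D.connectedComponentMk (ψ v).2).supp := by
    ext u
    constructor
    · rintro ⟨w, hw, rfl⟩
      rw [ConnectedComponent.mem_supp_iff, ConnectedComponent.eq] at hw ⊢
      exact ((fiberGraph_reachable ψ D w v).mp hw).2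
    · intro hu
      rw [ConnectedComponent.mem_supp_iff, ConnectedComponent.eq] at hu
      refine ⟨ψ.symm ((ψ v).1, u), ?_, by simp⟩
      rw [ConnectedComponent.mem_supp_iff, ConnectedComponent.eq, fiberGraph_reachable]
      constructor
      · simp
      · simpa using hu
  have hinj : Set.InjOn (fun w => (ψ w).2) ((fiberGraph ψ D).connectedComponentMk v).supp := by
    intro a ha b hb hab
    rw [ConnectedComponent.mem_supp_iff, ConnectedComponent.eq] at ha hb
    have ha1 := ((fiberGraph_reachable ψ D a v).mp ha).1
    have hb1 := ((fiberGraph_reachable ψ D b v).mp hb).1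
    exact ψ.injective (Prod.ext (ha1.trans hb1.symm) hab)
  rw [← himg, Set.ncard_image_of_injOn hinj]

lemma fiberGraph_cycleFactor {V C U : Type*} (ψ : V ≃ C × U) (D : SimpleGraph U) (k : ℕ)
    (h : IsCycleFactor D k) : IsCycleFactor (fiberGraph ψ D) k := by
  constructor
  · intro v; rw [fiberGraph_neighborSet_ncard]; exact h.1 _
  · intro v; rw [fiberGraph_supp_ncard]; exact h.2 _

lemma fiberGraph_edge_mem {V C U : Type*} (ψ : V ≃ C × U) (D : SimpleGraph U) (v w : V) :
    s(v, w) ∈ (fiberGraph ψ D).edgeSet ↔ (ψ v).1 = (ψ w).1 ∧ s((ψ v).2, (ψ w).2) ∈ D.edgeSet := by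
  rw [mem_edgeSet, mem_edgeSet, fiberGraph_adj]

lemma fiberGraph_decomp {V C U : Type*} (ψ : V ≃ C × U) {D : SimpleGraph U}
    {Df : ℕ → SimpleGraph U} {N : ℕ} (h : IsDecompOn D Df N) :
    IsDecompOn (fiberGraph ψ D) (fun i => fiberGraph ψ (Df i)) N := by
  obtain ⟨hle, hdisj, huniv⟩ := h
  refine ⟨fun i hi => fiberGraph_mono ψ (hle i hi), ?_, ?_⟩
  · intro i hi j hj hij
    rw [Set.disjoint_left]
    intro e he he'
    induction e with
    | h v w =>
      rw [fiberGraph_edge_mem] at he he'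
      exact Set.disjoint_left.mp (hdisj i hi j hj hij) he.2 he'.2
  · ext e
    induction e with
    | h v w =>
      rw [fiberGraph_edge_mem, huniv]
      simp only [Set.mem_iUnion, Set.mem_Iio, exists_prop]
      constructor
      · rintro ⟨hc, i, hi, he⟩
        exact ⟨i, hi, (fiberGraph_edge_mem ψ (Df i) v w).mpr ⟨hc, he⟩⟩
      · rintro ⟨i, hi, he⟩
        rw [fiberGraph_edge_mem] at he
        exact ⟨he.1, i, hi, he.2⟩

lemma fiberGraph_HW {V C U : Type*} (ψ : V ≃ C × U) {D : SimpleGraph U} {m n a b : ℕ}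
    (h : IsHWGraph D m n a b) : IsHWGraph (fiberGraph ψ D) m n a b := by
  obtain ⟨Df, hdec, hm, hn⟩ := h
  exact ⟨fun i => fiberGraph ψ (Df i), fiberGraph_decomp ψ hdec,
    fun i hi => fiberGraph_cycleFactor ψ _ _ (hm i hi),
    fun i hi hi' => fiberGraph_cycleFactor ψ _ _ (hn i hi hi')⟩
end lemmas

lemma cycle_comp {V : Type*} [Finite V] {H : SimpleGraph V}
    (h2 : ∀ v, (H.neighborSet v).ncard = 2) (v0 : V) {k : ℕ}
    (hk : (H.connectedComponentMk v0).supp.ncard = k) :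
    ∃ e0 : ZMod k → V, Function.Injective e0 ∧
      Set.range e0 = (H.connectedComponentMk v0).supp ∧
      (∀ a b : ZMod k, H.Adj (e0 a) (e0 b) ↔ (cycGraph k).Adj a b) := by
  classical
  -- the "other neighbour" function
  have hother : ∀ v w, H.Adj v w →
      ∃ x, (H.Adj v x ∧ x ≠ w) ∧ ∀ y, H.Adj v y → y ≠ w → y = x := by
    intro v w hvw
    obtain ⟨x, y, hxy, hset⟩ := Set.ncard_eq_two.mp (h2 v)
    have hmem : ∀ z, H.Adj v z ↔ z = x ∨ z = y := by
      intro z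
      have : z ∈ H.neighborSet v ↔ z ∈ ({x, y} : Set V) := by rw [hset]
      simpa [SimpleGraph.mem_neighborSet] using this
    rcases (hmem w).mp hvw with rfl | rfl
    · refine ⟨y, ⟨(hmem y).mpr (Or.inr rfl), hxy.symm⟩, ?_⟩
      intro z hz hzw
      rcases (hmem z).mp hz with rfl | rfl
      · exact absurd rfl hzw
      · rfl
    · refine ⟨x, ⟨(hmem x).mpr (Or.inl rfl), hxy⟩, ?_⟩
      intro z hz hzw
      rcases (hmem z).mp hz with rfl | rfl
      · rfl
      · exact absurd rfl hzw
  choose o ho1 ho3 using hother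
  have ho2 : ∀ v w (h : H.Adj v w), o v w h ≠ w := fun v w h => (ho1 v w h).2
  have hoadj : ∀ v w (h : H.Adj v w), H.Adj v (o v w h) := fun v w h => (ho1 v w h).1
  -- the directed-edge dynamical system
  let D := {z : V × V // H.Adj z.1 z.2}
  let succ : D → D := fun z => ⟨(z.1.2, o z.1.2 z.1.1 z.2.symm), hoadj _ _ _⟩
  let pred : D → D := fun z => ⟨(o z.1.1 z.1.2 z.2, z.1.1), (hoadj _ _ _).symm⟩
  have pred_succ : ∀ z, pred (succ z) = z := by
    rintro ⟨⟨v, w⟩, hz⟩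
    apply Subtype.ext
    have h1 : o w (o w v hz.symm) (hoadj w v hz.symm) = v :=
      (ho3 w (o w v hz.symm) (hoadj w v hz.symm) v hz.symm (Ne.symm (ho2 w v hz.symm))).symm
    exact Prod.ext h1 rfl
  have succ_inj : Function.Injective succ := by
    intro a b hab
    rw [← pred_succ a, hab, pred_succ]
  -- a starting directed edge
  obtain ⟨w0, hw0⟩ : ∃ w0, H.Adj v0 w0 := by
    obtain ⟨x, y, hxy, hset⟩ := Set.ncard_eq_two.mp (h2 v0)
    exact ⟨x, by rw [← SimpleGraph.mem_neighborSet, hset]; exact Or.inl rfl⟩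
  let z0 : D := ⟨(v0, w0), hw0⟩
  -- periodicity
  have hperiodic : z0 ∈ Function.periodicPts succ := by
    obtain ⟨a, b, hab, heq⟩ :=
      Finite.exists_ne_map_eq_of_infinite (fun n : ℕ => succ^[n] z0)
    rcases Nat.lt_or_ge a b with h | h
    · refine ⟨b - a, by omega, ?_⟩
      have : succ^[a] (succ^[b-a] z0) = succ^[a] z0 := by
        rw [← Function.iterate_add_apply]
        have : a + (b - a) = b := by omega
        rw [this, heq]
      exact (succ_inj.iterate a) this
    · have hab' : b < a := by omega
      refine ⟨a - b, by omega, ?_⟩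
      have : succ^[b] (succ^[a-b] z0) = succ^[b] z0 := by
        rw [← Function.iterate_add_apply]
        have : b + (a - b) = a := by omega
        rw [this, ← heq]
      exact (succ_inj.iterate b) this
  set T := Function.minimalPeriod succ z0 with hTdef
  have hT : 0 < T := Function.minimalPeriod_pos_of_mem_periodicPts hperiodic
  set p : ℕ → D := fun n => succ^[n] z0 with hpdef
  set f : ℕ → V := fun n => (p n).1.1 with hfdef
  have hp_succ : ∀ n, p (n + 1) = succ (p n) := fun n => Function.iterate_succ_apply' _ _ _
  have hf1 : ∀ n, (p n).1.2 = f (n + 1) := by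
    intro n
    show (p n).1.2 = (p (n+1)).1.1
    rw [hp_succ n]
  have hadj : ∀ n, H.Adj (f n) (f (n + 1)) := by
    intro n
    rw [← hf1 n]
    exact (p n).2
  have hper : ∀ n, p (n + T) = p n := by
    intro n
    show succ^[n + T] z0 = succ^[n] z0
    rw [Function.iterate_add_apply]
    exact congrArg succ^[n] (Function.isPeriodicPt_minimalPeriod succ z0)
  have hfper : ∀ n, f (n + T) = f n := fun n => congrArg (fun z => z.1.1) (hper n)
  have hmodf : ∀ n, f n = f (n % T) := by
    intro n
    show (succ^[n] z0).1.1 = (succ^[n % T] z0).1.1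
    rw [Function.iterate_mod_minimalPeriod_eq]
  -- neighbours of f (n+1) are exactly f n and f (n+2)
  have hne2 : ∀ n, f (n + 2) ≠ f n := by
    intro n
    have h1 : f (n + 2) = (p (n+1)).1.2 := (hf1 (n+1)).symm
    rw [h1, hp_succ n]
    exact ho2 _ _ _
  have hnext : ∀ n x, H.Adj (f (n + 1)) x → x = f n ∨ x = f (n + 2) := by
    intro n x hx
    by_cases hxn : x = f n
    · exact Or.inl hxn
    · right
      have e1 : x = o (f (n+1)) (f n) (hadj n).symm := ho3 _ _ _ x hx hxn
      have e2 : f (n + 2) = o (f (n+1)) (f n) (hadj n).symm :=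
        ho3 _ _ _ _ (hadj (n+1)) (hne2 n)
      rw [e1, ← e2]
  -- reversal
  let rev : D → D := fun z => ⟨(z.1.2, z.1.1), z.2.symm⟩
  have conj : ∀ z, succ (rev (succ z)) = rev z := by
    rintro ⟨⟨v, w⟩, hz⟩
    apply Subtype.ext
    refine Prod.ext rfl ?_
    show o w (o w v hz.symm) _ = v
    exact (ho3 w (o w v hz.symm) (hoadj w v hz.symm) v hz.symm (Ne.symm (ho2 w v hz.symm))).symm
  have hK : ∀ (j : ℕ) (z : D), succ^[j] (rev (succ^[j] z)) = rev z := by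
    intro j
    induction j with
    | zero => intro z; rfl
    | succ j ih =>
      intro z
      rw [Function.iterate_succ_apply' succ j z, Function.iterate_succ_apply succ j, conj, ih]
  have hrevp : ∀ i j, rev (p i) = p j → rev z0 = p (i + j) := by
    intro i j hij
    have : succ^[i] (rev (p i)) = rev z0 := hK i z0
    rw [hij] at this
    have h2 : succ^[i] (p j) = p (i + j) := by
      show succ^[i] (succ^[j] z0) = succ^[i + j] z0
      rw [Function.iterate_add_apply]
    exact this.symm.trans h2
  have hcontra : ∀ d, rev z0 = p d → False := by
    intro d hd
    have hrev2 : ∀ n, n ≤ d → rev (p n) = p (d - n) := by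
      intro n hn
      apply succ_inj.iterate n
      have h1 : succ^[n] (rev (p n)) = rev z0 := hK n z0
      have h2 : succ^[n] (p (d - n)) = p d := by
        show succ^[n] (succ^[d-n] z0) = succ^[d] z0
        rw [← Function.iterate_add_apply]
        congr 1
        omega
      rw [h1, h2, hd]
    rcases Nat.even_or_odd d with ⟨e, he⟩ | ⟨e, he⟩
    · have h1 : rev (p e) = p e := by
        have := hrev2 e (by omega)
        have hde : d - e = e := by omega
        rwa [hde] at this
      have h2 : (p e).1.2 = (p e).1.1 := congrArg (fun z => z.1.1) h1
      exact H.loopless.irrefl _ (h2 ▸ (p e).2)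
    · have h1 : rev (p e) = p (e + 1) := by
        have := hrev2 e (by omega)
        have hde : d - e = e + 1 := by omega
        rwa [hde] at this
      have h2 : (p e).1.1 = (p (e+1)).1.2 := congrArg (fun z : D => z.1.2) h1
      rw [hf1 (e+1)] at h2
      exact hne2 e h2.symm
  -- injectivity of f on [0, T)
  have hinj : Set.InjOn f (Set.Iio T) := by
    have key : ∀ a b, a < b → b < T → f a = f b → False := by
      intro a b hab hbT hfab
      by_cases h1 : f (a + 1) = f (b + 1)
      · have hpa : p a = p b := by
          apply Subtype.ext
          apply Prod.ext
          · exact hfab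
          · rw [hf1 a, hf1 b, h1]
        have := Function.iterate_injOn_Iio_minimalPeriod (f := succ) (x := z0)
          (show a ∈ Set.Iio T by simp; omega) (show b ∈ Set.Iio T by simp; omega) hpa
        omega
      · -- f (b+1) must be the "other" neighbour of f a, namely f (a + T - 1)
        have hc1 : a + T - 1 + 1 = a + T := by omega
        have hc2 : a + T - 1 + 2 = a + 1 + T := by omega
        have hadjb : H.Adj (f (a + T - 1 + 1)) (f (b + 1)) := by
          rw [hc1, hfper a, hfab]
          exact hadj b
        rcases hnext (a + T - 1) (f (b+1)) hadjb with h | h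
        · -- rev (p (a+T-1)) = p b
          have hrel : rev (p (a + T - 1)) = p b := by
            apply Subtype.ext
            apply Prod.ext
            · show (p (a+T-1)).1.2 = (p b).1.1
              rw [hf1]
              show f (a + T - 1 + 1) = f b
              rw [hc1, hfper a, hfab]
            · show (p (a+T-1)).1.1 = (p b).1.2
              rw [hf1]
              exact h.symm
          exact hcontra _ (hrevp _ _ hrel)
        · rw [hc2, hfper (a+1)] at h
          exact h1 h.symm
    intro a ha b hb hfab
    rcases lt_trichotomy a b with h | h | h
    · exact absurd hfab (fun he => key a b h hb he)
    · exact h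
    · exact absurd hfab.symm (fun he => key b a h ha he)
  -- range of f is the component
  have hrange : Set.range f = (H.connectedComponentMk v0).supp := by
    apply Set.eq_of_subset_of_subset
    · rintro x ⟨n, rfl⟩
      rw [SimpleGraph.ConnectedComponent.mem_supp_iff, SimpleGraph.ConnectedComponent.eq]
      induction n with
      | zero => exact Reachable.refl _
      | succ n ih => exact (Adj.reachable (hadj n).symm).trans ih
    · intro w hw
      rw [SimpleGraph.ConnectedComponent.mem_supp_iff, SimpleGraph.ConnectedComponent.eq] at hw
      have hclosed : ∀ x, x ∈ Set.range f → ∀ y, H.Adj x y → y ∈ Set.range f := by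
        rintro x ⟨n, rfl⟩ y hy
        have hc1 : n + T - 1 + 1 = n + T := by omega
        have hy' : H.Adj (f (n + T - 1 + 1)) y := by rw [hc1, hfper n]; exact hy
        rcases hnext (n + T - 1) y hy' with h | h
        · exact ⟨n + T - 1, h.symm⟩
        · exact ⟨n + T - 1 + 2, h.symm⟩
      obtain ⟨q⟩ := hw.symm
      have : ∀ (x y : V) (q : H.Walk x y), x ∈ Set.range f → y ∈ Set.range f := by
        intro x y q
        induction q with
        | nil => exact id
        | cons h q ih => exact fun hx => ih (hclosed _ hx _ h)
      exact this v0 w q ⟨0, rfl⟩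
  have hIio : Set.range f = f '' Set.Iio T := by
    apply Set.eq_of_subset_of_subset
    · rintro x ⟨n, rfl⟩
      exact ⟨n % T, by simp [Nat.mod_lt n hT], (hmodf n).symm⟩
    · rintro x ⟨n, _, rfl⟩
      exact ⟨n, rfl⟩
  have hTk : T = k := by
    rw [← hk, ← hrange, hIio, Set.ncard_image_of_injOn hinj]
    have : Set.Iio T = ↑(Finset.range T) := by ext x; simp
    rw [this, Set.ncard_coe_finset, Finset.card_range]
  haveI hkNZ : NeZero k := ⟨by omega⟩
  have hmodk : ∀ n, f (n % k) = f n := by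
    intro n
    rw [← hTk]
    exact (hmodf n).symm
  -- the cycle parametrisation
  refine ⟨fun a => f (ZMod.val a), ?_, ?_, ?_⟩
  case _ =>
    intro a b hab
    have := hinj (show ZMod.val a ∈ Set.Iio T by simp [ZMod.val_lt, hTk])
      (show ZMod.val b ∈ Set.Iio T by simp [ZMod.val_lt, hTk]) hab
    exact ZMod.val_injective k this
  case _ =>
    rw [← hrange]
    apply Set.eq_of_subset_of_subset
    · rintro x ⟨a, rfl⟩
      exact ⟨ZMod.val a, rfl⟩
    · rintro x ⟨n, rfl⟩
      refine ⟨(n : ZMod k), ?_⟩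
      show f (ZMod.val (n : ZMod k)) = f n
      rw [ZMod.val_natCast, ← hTk, ← hmodf]
  case _ =>
    have hsucc_e : ∀ a : ZMod k, f (ZMod.val (a + 1)) = f (ZMod.val a + 1) := by
      intro a
      have h1 : (a + 1 : ZMod k) = ((ZMod.val a + 1 : ℕ) : ZMod k) := by
        push_cast [ZMod.natCast_val, ZMod.cast_id]
        ring
      rw [h1, ZMod.val_natCast]
      exact hmodk _
    have hpred_e : ∀ a : ZMod k, f (ZMod.val (a - 1)) = f (ZMod.val a + T - 1) := by
      intro a
      have h1 : (a - 1 : ZMod k) = ((ZMod.val a + T - 1 : ℕ) : ZMod k) := by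
        have h2 : (ZMod.val a + T - 1 : ℕ) = ZMod.val a + (T - 1) := by omega
        rw [h2]
        push_cast [ZMod.natCast_val, ZMod.cast_id]
        have h3 : ((T - 1 : ℕ) : ZMod k) = (T : ZMod k) - 1 := by
          have : (1 : ℕ) ≤ T := hT
          push_cast [Nat.cast_sub this]
          ring
        rw [h3, hTk, ZMod.natCast_self]
        ring
      rw [h1, ZMod.val_natCast]
      exact hmodk _
    intro a b
    constructor
    · intro hab
      have hne : a ≠ b := by
        rintro rfl
        exact H.loopless.irrefl _ hab
      have hc1 : ZMod.val a + T - 1 + 1 = ZMod.val a + T := by omega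
      have hc2 : ZMod.val a + T - 1 + 2 = ZMod.val a + 1 + T := by omega
      have hab' : H.Adj (f (ZMod.val a + T - 1 + 1)) (f (ZMod.val b)) := by
        rw [hc1, hfper]
        exact hab
      have hvinj : ∀ c : ZMod k, f (ZMod.val b) = f (ZMod.val c) → b = c := by
        intro c hbc
        have := hinj (show ZMod.val b ∈ Set.Iio T by simp [ZMod.val_lt, hTk])
          (show ZMod.val c ∈ Set.Iio T by simp [ZMod.val_lt, hTk]) hbc
        exact ZMod.val_injective k this
      rcases hnext _ _ hab' with h | h
      · have : b = a - 1 := hvinj _ (by rw [hpred_e a]; exact h)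
        rw [cycGraph, SimpleGraph.fromRel_adj]
        exact ⟨hne, Or.inl (by rw [this]; ring)⟩
      · rw [hc2, hfper] at h
        have : b = a + 1 := hvinj _ (by rw [hsucc_e a]; exact h)
        rw [cycGraph, SimpleGraph.fromRel_adj]
        exact ⟨hne, Or.inr this⟩
    · intro hab
      rw [cycGraph, SimpleGraph.fromRel_adj] at hab
      rcases hab.2 with h | h
      · show H.Adj (f (ZMod.val a)) (f (ZMod.val b))
        rw [h, hsucc_e b]
        exact (hadj (ZMod.val b)).symm
      · show H.Adj (f (ZMod.val a)) (f (ZMod.val b))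
        rw [h, hsucc_e a]
        exact hadj (ZMod.val a)

lemma cycle_factor_fiber {V : Type*} [Finite V] {H : SimpleGraph V} {k : ℕ}
    (h : IsCycleFactor H k) :
    ∃ ψ : V ≃ H.ConnectedComponent × ZMod k, H = fiberGraph ψ (cycGraph k) := by
  classical
  -- a representative for each component
  have hrep : ∀ c : H.ConnectedComponent, ∃ v, H.connectedComponentMk v = c :=
    fun c => c.exists_rep
  choose rep hrep using hrep
  -- a cycle parametrisation of each component
  have hcyc := fun c : H.ConnectedComponent => cycle_comp h.1 (rep c) (h.2 (rep c))
  choose e0 he0inj he0rng he0adj using hcyc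
  have hmemc : ∀ (c : H.ConnectedComponent) (a : ZMod k),
      H.connectedComponentMk (e0 c a) = c := by
    intro c a
    have : e0 c a ∈ Set.range (e0 c) := ⟨a, rfl⟩
    rw [he0rng c] at this
    rw [(SimpleGraph.ConnectedComponent.mem_supp_iff _ _).mp this, hrep]
  let Φ : H.ConnectedComponent × ZMod k → V := fun q => e0 q.1 q.2
  have hbij : Function.Bijective Φ := by
    constructor
    · rintro ⟨c, a⟩ ⟨c', a'⟩ h'
      have hc : c = c' := by
        rw [← hmemc c a, ← hmemc c' a']
        exact congrArg _ h'
      subst hc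
      exact Prod.ext rfl (he0inj c h')
    · intro v
      have : v ∈ Set.range (e0 (H.connectedComponentMk v)) := by
        rw [he0rng, SimpleGraph.ConnectedComponent.mem_supp_iff, hrep]
      obtain ⟨a, ha⟩ := this
      exact ⟨(H.connectedComponentMk v, a), ha⟩
  let ψ : V ≃ H.ConnectedComponent × ZMod k := (Equiv.ofBijective Φ hbij).symm
  have hψ : ∀ v, Φ (ψ v) = v := fun v => (Equiv.ofBijective Φ hbij).apply_symm_apply v
  refine ⟨ψ, ?_⟩
  ext v w
  show H.Adj v w ↔ (ψ v).1 = (ψ w).1 ∧ (cycGraph k).Adj (ψ v).2 (ψ w).2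
  constructor
  · intro hvw
    have hc : (ψ v).1 = (ψ w).1 := by
      have h1 : H.connectedComponentMk v = H.connectedComponentMk w :=
        SimpleGraph.ConnectedComponent.eq.mpr hvw.reachable
      have h2 : H.connectedComponentMk (Φ (ψ v)) = (ψ v).1 := hmemc _ _
      have h3 : H.connectedComponentMk (Φ (ψ w)) = (ψ w).1 := hmemc _ _
      rw [hψ] at h2 h3
      rw [← h2, ← h3, h1]
    refine ⟨hc, ?_⟩
    have hv : e0 (ψ v).1 (ψ v).2 = v := hψ v
    have hw : e0 (ψ v).1 (ψ w).2 = w := by rw [hc]; exact hψ w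
    rw [← (he0adj (ψ v).1 (ψ v).2 (ψ w).2), hv, hw]
    exact hvw
  · rintro ⟨hc, hadj⟩
    have hv : e0 (ψ v).1 (ψ v).2 = v := hψ v
    have hw : e0 (ψ v).1 (ψ w).2 = w := by rw [hc]; exact hψ w
    rw [← hv, ← hw]
    exact (he0adj (ψ v).1 (ψ v).2 (ψ w).2).mpr hadj

lemma blow {V : Type*} [Finite V] {F : SimpleGraph V} {k s m' n' a b : ℕ}
    (hF : IsCycleFactor F k) (h : IsHWGraph (lexProd (cycGraph k) s) m' n' a b) :
    IsHWGraph (lexProd F s) m' n' a b := by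
  obtain ⟨ψ, hψ⟩ := cycle_factor_fiber hF
  rw [hψ, lexProd_fiberGraph]
  exact fiberGraph_HW _ h

lemma kpartite_adj {u g : ℕ} (x y : Fin u × Fin g) :
    (Kpartite u g).Adj x y ↔ x.1 ≠ y.1 := by
  rw [Kpartite, SimpleGraph.fromRel_adj]
  constructor
  · rintro ⟨hne, h | h⟩
    · exact h
    · exact h.symm
  · intro h
    exact ⟨fun he => h (congrArg Prod.fst he), Or.inl h⟩

theorem stmt_8 (u g s m n m' n' α β : ℕ) (t r : ℕ → ℕ)
    (hG : IsHWGraph (Kpartite u g) m n α β)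
    (ht : ∀ i, 1 ≤ i → i ≤ α →
      t i ≤ s ∧ IsHWGraph (lexProd (cycGraph m) s) m' n' (t i) (s - t i))
    (hr : ∀ j, 1 ≤ j → j ≤ β →
      r j ≤ s ∧ IsHWGraph (lexProd (cycGraph n) s) m' n' (r j) (s - r j)) :
    IsHWGraph (Kpartite u (g * s)) m' n'
      ((∑ i ∈ Finset.Icc 1 α, t i) + (∑ j ∈ Finset.Icc 1 β, r j))
      ((α + β) * s - ((∑ i ∈ Finset.Icc 1 α, t i) + (∑ j ∈ Finset.Icc 1 β, r j))) := by
  classical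
  obtain ⟨F, ⟨hFle, hFdisj, hFuniv⟩, hm, hn⟩ := hG
  set N := α + β with hNdef
  set t' : ℕ → ℕ := fun i => if i < α then t (i + 1) else r (i - α + 1) with ht'def
  have ht'le : ∀ i < N, t' i ≤ s := by
    intro i hi
    by_cases h : i < α
    · have h1 : t' i = t (i + 1) := by simp [ht'def, h]
      rw [h1]; exact (ht (i+1) (by omega) (by omega)).1
    · have h1 : t' i = r (i - α + 1) := by simp [ht'def, h]
      rw [h1]; exact (hr (i - α + 1) (by omega) (by omega)).1
  -- the refined decompositions of the blown-up factors
  have hKex : ∀ i, ∃ K : ℕ → SimpleGraph ((Fin u × Fin g) × Fin s),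
      i < N → IsDecompOn (lexProd (F i) s) K s ∧
        (∀ j < t' i, IsCycleFactor (K j) m') ∧
        (∀ j, t' i ≤ j → j < s → IsCycleFactor (K j) n') := by
    intro i
    by_cases hi : i < N
    · have hHW : IsHWGraph (lexProd (F i) s) m' n' (t' i) (s - t' i) := by
        by_cases h : i < α
        · have h1 : t' i = t (i + 1) := by simp [ht'def, h]
          rw [h1]
          exact blow (hm i h) (ht (i+1) (by omega) (by omega)).2
        · have h1 : t' i = r (i - α + 1) := by simp [ht'def, h]
          rw [h1]
          exact blow (hn i (by omega) hi) (hr (i - α + 1) (by omega) (by omega)).2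
      obtain ⟨K, hKdec, hKm, hKn⟩ := hHW
      have hsum : t' i + (s - t' i) = s := by have := ht'le i hi; omega
      rw [hsum] at hKdec hKn
      exact ⟨K, fun _ => ⟨hKdec, hKm, hKn⟩⟩
    · exact ⟨fun _ => ⊥, fun h => absurd h hi⟩
  choose K hK using hKex
  -- the total number of C_m' factors
  set Atot := ∑ i ∈ Finset.range N, t' i with hAtotdef
  have hsum_split : Atot
      = (∑ i ∈ Finset.Icc 1 α, t i) + (∑ j ∈ Finset.Icc 1 β, r j) := by
    rw [hAtotdef, Finset.range_eq_Ico,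
      ← Finset.sum_Ico_consecutive _ (Nat.zero_le α) (show α ≤ N by omega)]
    congr 1
    · rw [← Finset.range_eq_Ico, show Finset.Icc 1 α = Finset.Ico 1 (α + 1) from
        (Finset.Ico_add_one_right_eq_Icc 1 α).symm, Finset.sum_Ico_eq_sum_range]
      simp only [Nat.add_sub_cancel]
      apply Finset.sum_congr rfl
      intro i hi
      rw [Finset.mem_range] at hi
      simp [ht'def, hi, Nat.add_comm]
    · rw [Finset.sum_Ico_eq_sum_range, show N - α = β by omega,
        show Finset.Icc 1 β = Finset.Ico 1 (β + 1) from (Finset.Ico_add_one_right_eq_Icc 1 β).symm,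
        Finset.sum_Ico_eq_sum_range]
      simp only [Nat.add_sub_cancel]
      apply Finset.sum_congr rfl
      intro i hi
      have h1 : ¬ α + i < α := by omega
      simp [ht'def, h1, Nat.add_comm]
  -- index bookkeeping
  set P := (Finset.range N) ×ˢ (Finset.range s) with hPdef
  set Sm := P.filter (fun z => z.2 < t' z.1) with hSmdef
  set Sn := P.filter (fun z => ¬ z.2 < t' z.1) with hSndef
  have hcard_m : Sm.card = Atot := by
    rw [hSmdef, Finset.card_filter, hPdef, Finset.sum_product, hAtotdef]
    apply Finset.sum_congr rfl
    intro i hi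
    rw [Finset.mem_range] at hi
    rw [← Finset.card_filter]
    have : (Finset.range s).filter (fun j => j < t' i) = Finset.range (t' i) := by
      ext j
      simp only [Finset.mem_filter, Finset.mem_range]
      have := ht'le i hi
      omega
    rw [this, Finset.card_range]
  have hcard_P : P.card = N * s := by
    rw [hPdef, Finset.card_product, Finset.card_range, Finset.card_range]
  have hcard_sum : Sm.card + Sn.card = N * s := by
    rw [hSmdef, hSndef, Finset.card_filter_add_card_filter_not, hcard_P]
  have hAle : Atot ≤ N * s := by omega
  have hcard_n : Sn.card = N * s - Atot := by omega
  have hSm_mem : ∀ z : ℕ × ℕ, z ∈ Sm ↔ (z.1 < N ∧ z.2 < s) ∧ z.2 < t' z.1 := by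
    intro z
    rw [hSmdef, Finset.mem_filter, hPdef, Finset.mem_product, Finset.mem_range, Finset.mem_range]
  have hSn_mem : ∀ z : ℕ × ℕ, z ∈ Sn ↔ (z.1 < N ∧ z.2 < s) ∧ ¬ z.2 < t' z.1 := by
    intro z
    rw [hSndef, Finset.mem_filter, hPdef, Finset.mem_product, Finset.mem_range, Finset.mem_range]
  set em := Finset.equivFinOfCardEq hcard_m with hemdef
  set en := Finset.equivFinOfCardEq hcard_n with hendef
  set pair : ℕ → ℕ × ℕ := fun q =>
    if h : q < Atot then (em.symm ⟨q, h⟩ : {x // x ∈ Sm}).1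
    else if h' : q - Atot < N * s - Atot then (en.symm ⟨q - Atot, h'⟩ : {x // x ∈ Sn}).1
    else (0, 0) with hpairdef
  have hpair_m : ∀ q (h : q < Atot), pair q = (em.symm ⟨q, h⟩ : {x // x ∈ Sm}).1 := by
    intro q h
    rw [hpairdef]
    simp only [dif_pos h]
  have hpair_n : ∀ q (h : ¬ q < Atot) (h' : q - Atot < N * s - Atot),
      pair q = (en.symm ⟨q - Atot, h'⟩ : {x // x ∈ Sn}).1 := by
    intro q h h'
    rw [hpairdef]
    simp only [dif_neg h, dif_pos h']
  have hpair_mem : ∀ q, q < N * s → (pair q).1 < N ∧ (pair q).2 < s ∧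
      ((pair q).2 < t' (pair q).1 ↔ q < Atot) := by
    intro q hq
    by_cases h : q < Atot
    · have hmem := (hSm_mem _).mp (em.symm ⟨q, h⟩).2
      rw [hpair_m q h]
      exact ⟨hmem.1.1, hmem.1.2, iff_of_true hmem.2 h⟩
    · have h' : q - Atot < N * s - Atot := by omega
      have hmem := (hSn_mem _).mp (en.symm ⟨q - Atot, h'⟩).2
      rw [hpair_n q h h']
      exact ⟨hmem.1.1, hmem.1.2, iff_of_false hmem.2 h⟩
  have hpair_inj : ∀ q q', q < N * s → q' < N * s → q ≠ q' → pair q ≠ pair q' := by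
    intro q q' hq hq' hne heq
    by_cases h1 : q < Atot <;> by_cases h2 : q' < Atot
    · rw [hpair_m q h1, hpair_m q' h2] at heq
      have := em.symm.injective (Subtype.ext heq)
      exact hne (congrArg Fin.val this)
    · have h2' : q' - Atot < N * s - Atot := by omega
      rw [hpair_m q h1, hpair_n q' h2 h2'] at heq
      have hm1 := (hSm_mem _).mp (em.symm ⟨q, h1⟩).2
      have hn1 := (hSn_mem _).mp (en.symm ⟨q' - Atot, h2'⟩).2
      rw [heq] at hm1
      exact hn1.2 hm1.2
    · have h1' : q - Atot < N * s - Atot := by omega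
      rw [hpair_n q h1 h1', hpair_m q' h2] at heq
      have hm1 := (hSm_mem _).mp (em.symm ⟨q', h2⟩).2
      have hn1 := (hSn_mem _).mp (en.symm ⟨q - Atot, h1'⟩).2
      rw [heq] at hn1
      exact hn1.2 hm1.2
    · have h1' : q - Atot < N * s - Atot := by omega
      have h2' : q' - Atot < N * s - Atot := by omega
      rw [hpair_n q h1 h1', hpair_n q' h2 h2'] at heq
      have := en.symm.injective (Subtype.ext heq)
      have := congrArg Fin.val this
      simp only at this
      omega
  -- realizing a given pair
  have hpair_surj : ∀ i j, i < N → j < s → ∃ q, q < N * s ∧ pair q = (i, j) := by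
    intro i j hi hj
    by_cases h : j < t' i
    · have hmem : (i, j) ∈ Sm := (hSm_mem _).mpr ⟨⟨hi, hj⟩, h⟩
      refine ⟨(em ⟨(i, j), hmem⟩).val, by omega, ?_⟩
      have hlt : (em ⟨(i, j), hmem⟩).val < Atot := (em ⟨(i, j), hmem⟩).isLt
      rw [hpair_m _ hlt]
      have : (⟨(em ⟨(i, j), hmem⟩).val, hlt⟩ : Fin Atot) = em ⟨(i, j), hmem⟩ := rfl
      rw [this, Equiv.symm_apply_apply]
    · have hmem : (i, j) ∈ Sn := (hSn_mem _).mpr ⟨⟨hi, hj⟩, h⟩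
      have hvlt : (en ⟨(i, j), hmem⟩).val < N * s - Atot := (en ⟨(i, j), hmem⟩).isLt
      refine ⟨Atot + (en ⟨(i, j), hmem⟩).val, by omega, ?_⟩
      have h1 : ¬ Atot + (en ⟨(i, j), hmem⟩).val < Atot := by omega
      have h2 : Atot + (en ⟨(i, j), hmem⟩).val - Atot < N * s - Atot := by omega
      rw [hpair_n _ h1 h2]
      have : (⟨Atot + (en ⟨(i, j), hmem⟩).val - Atot, h2⟩ : Fin (N * s - Atot))
          = en ⟨(i, j), hmem⟩ := by
        apply Fin.ext
        simp
      rw [this, Equiv.symm_apply_apply]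
  -- the global family on (Fin u × Fin g) × Fin s
  set Ffin : ℕ → SimpleGraph ((Fin u × Fin g) × Fin s) :=
    fun q => K (pair q).1 (pair q).2 with hFfindef
  have hFfin_le : ∀ q < N * s, Ffin q ≤ lexProd (Kpartite u g) s := by
    intro q hq
    obtain ⟨hi, hj, _⟩ := hpair_mem q hq
    calc Ffin q ≤ lexProd (F (pair q).1) s := ((hK _ hi).1).1 _ hj
    _ ≤ lexProd (Kpartite u g) s := lexProd_mono s (hFle _ hi)
  have hFfin_disj : ∀ q < N * s, ∀ q' < N * s, q ≠ q' →
      Disjoint (Ffin q).edgeSet (Ffin q').edgeSet := by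
    intro q hq q' hq' hne
    obtain ⟨hi, hj, _⟩ := hpair_mem q hq
    obtain ⟨hi', hj', _⟩ := hpair_mem q' hq'
    have hpne := hpair_inj q q' hq hq' hne
    by_cases hii : (pair q).1 = (pair q').1
    · have hjj : (pair q).2 ≠ (pair q').2 := by
        intro h
        exact hpne (Prod.ext hii h)
      have hd := ((hK _ hi).1).2.1 (pair q).2 hj (pair q').2 hj' hjj
      rw [hFfindef]
      simp only
      rw [← hii]
      exact hd
    · apply Set.disjoint_of_subset
      · exact SimpleGraph.edgeSet_mono (((hK _ hi).1).1 _ hj)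
      · exact SimpleGraph.edgeSet_mono (((hK _ hi').1).1 _ hj')
      · exact lexProd_disjoint s (hFdisj _ hi _ hi' hii)
  have hFfin_univ : (lexProd (Kpartite u g) s).edgeSet
      = ⋃ q ∈ Set.Iio (N * s), (Ffin q).edgeSet := by
    apply Set.eq_of_subset_of_subset
    · intro e he
      induction e with
      | h a b =>
        rw [lexProd_edge_mem, hFuniv] at he
        simp only [Set.mem_iUnion, Set.mem_Iio, exists_prop] at he
        obtain ⟨i, hi, hei⟩ := he
        have he2 : s(a, b) ∈ (lexProd (F i) s).edgeSet := by
          rw [lexProd_edge_mem]; exact hei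
        rw [((hK i hi).1).2.2] at he2
        simp only [Set.mem_iUnion, Set.mem_Iio, exists_prop] at he2
        obtain ⟨j, hj, hej⟩ := he2
        obtain ⟨q, hq, hpq⟩ := hpair_surj i j hi hj
        simp only [Set.mem_iUnion, Set.mem_Iio, exists_prop]
        refine ⟨q, hq, ?_⟩
        rw [hFfindef]
        simp only [hpq]
        exact hej
    · intro e he
      simp only [Set.mem_iUnion, Set.mem_Iio, exists_prop] at he
      obtain ⟨q, hq, heq⟩ := he
      exact SimpleGraph.edgeSet_mono (hFfin_le q hq) heq
  have hFfin_m : ∀ q < Atot, IsCycleFactor (Ffin q) m' := by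
    intro q hq
    obtain ⟨hi, hj, hiff⟩ := hpair_mem q (by omega)
    exact ((hK _ hi).2).1 _ (hiff.mpr hq)
  have hFfin_n : ∀ q, Atot ≤ q → q < N * s → IsCycleFactor (Ffin q) n' := by
    intro q hq1 hq2
    obtain ⟨hi, hj, hiff⟩ := hpair_mem q hq2
    exact ((hK _ hi).2).2 _ (by have := hiff; omega) hj
  -- transfer to Fin u × Fin (g * s)
  let ψe : (Fin u × Fin (g * s)) ≃ PUnit.{1} × ((Fin u × Fin g) × Fin s) :=
    (Equiv.prodCongr (Equiv.refl (Fin u)) finProdFinEquiv.symm).trans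
      ((Equiv.prodAssoc (Fin u) (Fin g) (Fin s)).symm.trans (Equiv.punitProd _).symm)
  have hKp : Kpartite u (g * s) = fiberGraph ψe (lexProd (Kpartite u g) s) := by
    ext ⟨a, z⟩ ⟨b, w⟩
    rw [fiberGraph_adj, lexProd_adj, kpartite_adj]
    show a ≠ b ↔ _ ∧ (Kpartite u g).Adj _ _
    rw [kpartite_adj]
    show a ≠ b ↔ () = () ∧ a ≠ b
    simp
  rw [← hsum_split]
  have hNs : N * s = (α + β) * s := by rw [hNdef]
  have hcount : Atot + ((α + β) * s - Atot) = N * s := by omega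
  refine ⟨fun q => fiberGraph ψe (Ffin q), ?_, ?_, ?_⟩
  · rw [hcount, hKp]
    exact fiberGraph_decomp ψe ⟨hFfin_le, hFfin_disj, hFfin_univ⟩
  · intro q hq
    exact fiberGraph_cycleFactor ψe _ _ (hFfin_m q hq)
  · intro q hq1 hq2
    rw [hcount] at hq2
    exact fiberGraph_cycleFactor ψe _ _ (hFfin_n q hq1 hq2)
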